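/- (Fail-cover set no-false-alarm condition) In the setting of the previous statement (fail-cover hyper-node set T with f_{T,1} ≥ f_{T,0} and F covered by the boundary edges of T), let e' ∉ F be an operational link. If f_{T,g} - η(f_{T,1} + |D̃_{T,e'}|) < 0 when e' ∉ S_T, or f_{T,g} - η(f_{T,1} - |D̃_{T,e'}|) < 0 when e' ∈ S_T, then there exists z ≥ 0 solving the alternative system for Q_f = {e'}, Q_m = ∅ (with z_* = f_{T,1}); hence e' is not falsely detected as failed by the LP-based algorithm. -/
import Mathlib


open Matrix Finset

/-- Boundary edge set `E_U` of a hyper-node `U`. -/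
def EUb {V E : Type*} [Fintype E] [DecidableEq V] (ends : E → V × V) (U : Finset V) :
    Finset E :=
  Finset.univ.filter (fun e =>
    ((ends e).1 ∈ U ∧ (ends e).2 ∉ U) ∨ ((ends e).2 ∈ U ∧ (ends e).1 ∉ U))

/-- `D̃_{U,e} = ∑_{u ∈ U} D̃_{u,e}`. -/
noncomputable def dtU {V E : Type*} (Dt : Matrix V E ℝ) (U : Finset V) (e : E) : ℝ :=
  ∑ u ∈ U, Dt u e

/-- `f_{U,1} = min_{e ∈ E_U ∩ F} |D̃_{U,e}|`. -/
noncomputable def fU1 {V E : Type*} [Fintype E] [DecidableEq V] [DecidableEq E]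
    (ends : E → V × V) (Dt : Matrix V E ℝ) (F : Finset E) (U : Finset V) : ℝ :=
  sInf ((fun e => |dtU Dt U e|) '' ↑(EUb ends U ∩ F))

/-- `R_U = (max_{U' ∈ T} f_{U',1}) / f_{U,1}`. -/
noncomputable def RT {V E : Type*} [Fintype E] [DecidableEq V] [DecidableEq E]
    (ends : E → V × V) (Dt : Matrix V E ℝ) (F : Finset E)
    (Tn Tp : Finset (Finset V)) (U : Finset V) : ℝ :=
  sSup ((fun U' => fU1 ends Dt F U') '' ↑(Tn ∪ Tp)) / fU1 ends Dt F U

/-- `D̃_{T,e} = ∑_{U ∈ T_n} R_U D̃_{U,e} - ∑_{U ∈ T_p} R_U D̃_{U,e}`. -/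
noncomputable def dtT {V E : Type*} [Fintype E] [DecidableEq V] [DecidableEq E]
    (ends : E → V × V) (Dt : Matrix V E ℝ) (F : Finset E)
    (Tn Tp : Finset (Finset V)) (e : E) : ℝ :=
  ∑ U ∈ Tn, RT ends Dt F Tn Tp U * dtU Dt U e
    - ∑ U ∈ Tp, RT ends Dt F Tn Tp U * dtU Dt U e

/-- `S_T = {e' ∉ F : ∃ e ∈ F, D̃_{T,e'} D̃_{T,e} > 0}`. -/
def STset {V E : Type*} [Fintype E] [DecidableEq V] [DecidableEq E]
    (ends : E → V × V) (Dt : Matrix V E ℝ) (F : Finset E)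
    (Tn Tp : Finset (Finset V)) : Set E :=
  {e' | e' ∉ F ∧ ∃ e ∈ F, dtT ends Dt F Tn Tp e' * dtT ends Dt F Tn Tp e > 0}

/-- `f_{T,0} = max_{e' ∈ S_T} |D̃_{T,e'}|` (equal to `0` if `S_T = ∅`). -/
noncomputable def fT0 {V E : Type*} [Fintype E] [DecidableEq V] [DecidableEq E]
    (ends : E → V × V) (Dt : Matrix V E ℝ) (F : Finset E)
    (Tn Tp : Finset (Finset V)) : ℝ :=
  sSup ((fun e' => |dtT ends Dt F Tn Tp e'|) '' STset ends Dt F Tn Tp)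

/-- `f_{T,1} = min_{e ∈ F} |D̃_{T,e}|`. -/
noncomputable def fT1 {V E : Type*} [Fintype E] [DecidableEq V] [DecidableEq E]
    (ends : E → V × V) (Dt : Matrix V E ℝ) (F : Finset E)
    (Tn Tp : Finset (Finset V)) : ℝ :=
  sInf ((fun e => |dtT ends Dt F Tn Tp e|) '' ↑F)

/-- `f_{U,g}`: sum of `g_{D,u}` over `U` if some failed boundary edge has
`D̃_{U,l} < 0`, else the sum of `g_{D,-u}`. -/
noncomputable def fUg {V E : Type*} [Fintype E] [DecidableEq V] [DecidableEq E]
    (ends : E → V × V) (Dt : Matrix V E ℝ) (F : Finset E)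
    (gD gDm : V → ℝ) (U : Finset V) : ℝ :=
  if ((EUb ends U ∩ F).filter (fun l => dtU Dt U l < 0)).Nonempty then
    ∑ u ∈ U, gD u
  else ∑ u ∈ U, gDm u

/-- `f_{T,g} = ∑_{U ∈ T} R_U f_{U,g}`. -/
noncomputable def fTg {V E : Type*} [Fintype E] [DecidableEq V] [DecidableEq E]
    (ends : E → V × V) (Dt : Matrix V E ℝ) (F : Finset E)
    (gD gDm : V → ℝ) (Tn Tp : Finset (Finset V)) : ℝ :=
  ∑ U ∈ Tn ∪ Tp, RT ends Dt F Tn Tp U * fUg ends Dt F gD gDm U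


/-- Fail-cover set no-false-alarm condition. -/
theorem stmt13 {V E : Type*} [Fintype V] [DecidableEq V] [Fintype E] [DecidableEq E]
    (ends : E → V × V) (Dt : Matrix V E ℝ)
    (hD0 : ∀ u e, u ≠ (ends e).1 → u ≠ (ends e).2 → Dt u e = 0)
    (hskew : ∀ e, Dt (ends e).1 e = - Dt (ends e).2 e)
    (F : Finset E) (hFne : F.Nonempty) (gD gDm : V → ℝ) (η : ℝ) (hη : 0 < η ∧ η < 1)
    (Tn Tp : Finset (Finset V)) (hdisj : Disjoint Tn Tp)
    (hfailcover : ∀ U ∈ Tn ∪ Tp, (EUb ends U ∩ F).Nonempty ∧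
      ∀ e ∈ EUb ends U ∩ F, ∀ l ∈ EUb ends U ∩ F, dtU Dt U e * dtU Dt U l > 0)
    (hTn : ∀ U ∈ Tn, ∀ e ∈ F, dtU Dt U e ≤ 0)
    (hTp : ∀ U ∈ Tp, ∀ e ∈ F, 0 ≤ dtU Dt U e)
    (hcond_i : fT1 ends Dt F Tn Tp ≥ fT0 ends Dt F Tn Tp)
    (hcond_ii : ∀ e ∈ F, ∃ U ∈ Tn ∪ Tp, e ∈ EUb ends U)
    (e' : E) (he'F : e' ∉ F)
    (hcond3a : e' ∉ STset ends Dt F Tn Tp →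
      fTg ends Dt F gD gDm Tn Tp
        - η * (fT1 ends Dt F Tn Tp + |dtT ends Dt F Tn Tp e'|) < 0)
    (hcond3b : e' ∈ STset ends Dt F Tn Tp →
      fTg ends Dt F gD gDm Tn Tp
        - η * (fT1 ends Dt F Tn Tp - |dtT ends Dt F Tn Tp e'|) < 0) :
    ∃ (zD zDm : V → ℝ) (zxm zxp : E → ℝ) (zw zs : ℝ),
      (∀ u, 0 ≤ zD u) ∧ (∀ u, 0 ≤ zDm u) ∧ (∀ e, 0 ≤ zxm e) ∧ (∀ e, 0 ≤ zxp e) ∧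
      0 ≤ zw ∧ 0 ≤ zs ∧
      (∀ e, (∑ u, Dt u e * (zD u - zDm u)) + (zxp e - zxm e)
          - (if e = e' then zw else 0) + zs = 0) ∧
      ((∑ u, (gD u * zD u + gDm u * zDm u))
        + (∑ e, (zxp e * (1 - (if e ∈ F then (1 : ℝ) else 0))
            + zxm e * (if e ∈ F then (1 : ℝ) else 0)))
        - η * zw < 0) := by
  obtain ⟨hη0, hη1⟩ := hη
  -- f_{U,1} is positive on T
  have hfU1pos : ∀ U ∈ Tn ∪ Tp, 0 < fU1 ends Dt F U := by
    intro U hU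
    obtain ⟨hne, hprod⟩ := hfailcover U hU
    have hsne : ((fun e => |dtU Dt U e|) '' ↑(EUb ends U ∩ F)).Nonempty :=
      (hne.to_set).image _
    have hsfin : ((fun e => |dtU Dt U e|) '' ↑(EUb ends U ∩ F)).Finite :=
      ((EUb ends U ∩ F).finite_toSet).image _
    obtain ⟨e0, he0, heq⟩ := hsne.csInf_mem hsfin
    rw [fU1, ← heq]
    have hp := hprod e0 (Finset.mem_coe.mp he0) e0 (Finset.mem_coe.mp he0)
    have hne0 : dtU Dt U e0 ≠ 0 := by intro h; rw [h] at hp; simp at hp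
    exact abs_pos.mpr hne0
  -- R_U is positive on T
  have hRpos : ∀ U ∈ Tn ∪ Tp, 0 < RT ends Dt F Tn Tp U := by
    intro U hU
    have h1 := hfU1pos U hU
    have h2 : fU1 ends Dt F U ≤ sSup ((fun U' => fU1 ends Dt F U') '' ↑(Tn ∪ Tp)) := by
      refine le_csSup ?_ (Set.mem_image_of_mem _ (Finset.mem_coe.mpr hU))
      exact (((Tn ∪ Tp).finite_toSet).image _).bddAbove
    exact div_pos (lt_of_lt_of_le h1 h2) h1
  -- dtT is strictly negative on F
  have hdF : ∀ e ∈ F, dtT ends Dt F Tn Tp e < 0 := by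
    intro e heF
    obtain ⟨U0, hU0, hU0b⟩ := hcond_ii e heF
    have hU0bF : e ∈ EUb ends U0 ∩ F := Finset.mem_inter.mpr ⟨hU0b, heF⟩
    have hne0 : dtU Dt U0 e ≠ 0 := by
      have hp := (hfailcover U0 hU0).2 e hU0bF e hU0bF
      intro h; rw [h] at hp; simp at hp
    rw [dtT]
    rcases Finset.mem_union.mp hU0 with hn | hp
    · have hA : ∑ U ∈ Tn, RT ends Dt F Tn Tp U * dtU Dt U e < 0 := by
        have := Finset.sum_lt_sum (s := Tn)
          (f := fun U => RT ends Dt F Tn Tp U * dtU Dt U e) (g := fun _ => (0:ℝ))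
          (fun U hU => mul_nonpos_iff.mpr (Or.inl ⟨(hRpos U (Finset.mem_union_left _ hU)).le,
            hTn U hU e heF⟩))
          ⟨U0, hn, mul_neg_of_pos_of_neg (hRpos U0 hU0)
            (lt_of_le_of_ne (hTn U0 hn e heF) hne0)⟩
        simpa using this
      have hB : (0:ℝ) ≤ ∑ U ∈ Tp, RT ends Dt F Tn Tp U * dtU Dt U e :=
        Finset.sum_nonneg fun U hU =>
          mul_nonneg (hRpos U (Finset.mem_union_right _ hU)).le (hTp U hU e heF)
      linarith
    · have hA : ∑ U ∈ Tn, RT ends Dt F Tn Tp U * dtU Dt U e ≤ 0 :=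
        Finset.sum_nonpos fun U hU => mul_nonpos_iff.mpr
          (Or.inl ⟨(hRpos U (Finset.mem_union_left _ hU)).le, hTn U hU e heF⟩)
      have hB : (0:ℝ) < ∑ U ∈ Tp, RT ends Dt F Tn Tp U * dtU Dt U e := by
        have := Finset.sum_lt_sum (s := Tp)
          (f := fun _ => (0:ℝ)) (g := fun U => RT ends Dt F Tn Tp U * dtU Dt U e)
          (fun U hU => mul_nonneg (hRpos U (Finset.mem_union_right _ hU)).le (hTp U hU e heF))
          ⟨U0, hp, mul_pos (hRpos U0 hU0)
            (lt_of_le_of_ne (hTp U0 hp e heF) (Ne.symm hne0))⟩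
        simpa using this
      linarith
  -- fT1 facts
  have hFTne : ((fun e => |dtT ends Dt F Tn Tp e|) '' ↑F).Nonempty :=
    (hFne.to_set).image _
  have hFTfin : ((fun e => |dtT ends Dt F Tn Tp e|) '' ↑F).Finite :=
    (F.finite_toSet).image _
  have hfT1pos : 0 < fT1 ends Dt F Tn Tp := by
    obtain ⟨e1, he1, heq⟩ := hFTne.csInf_mem hFTfin
    rw [fT1, ← heq]
    exact abs_pos.mpr (hdF e1 (Finset.mem_coe.mp he1)).ne
  have hfT1le : ∀ e ∈ F, fT1 ends Dt F Tn Tp ≤ |dtT ends Dt F Tn Tp e| := by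
    intro e heF
    exact csInf_le hFTfin.bddBelow (Set.mem_image_of_mem _ (Finset.mem_coe.mpr heF))
  -- fT0 bound on S_T
  have hST : ∀ l, l ∈ STset ends Dt F Tn Tp →
      |dtT ends Dt F Tn Tp l| ≤ fT0 ends Dt F Tn Tp := by
    intro l hl
    refine le_csSup ?_ (Set.mem_image_of_mem _ hl)
    exact ((Set.toFinite (STset ends Dt F Tn Tp)).image _).bddAbove
  -- lower bound for dtT off F
  have hdlow : ∀ l, l ∉ F → -(fT1 ends Dt F Tn Tp) ≤ dtT ends Dt F Tn Tp l := by
    intro l hlF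
    by_cases hl : l ∈ STset ends Dt F Tn Tp
    · have h1 := hST l hl
      have h2 := neg_abs_le (dtT ends Dt F Tn Tp l)
      linarith [hcond_i]
    · obtain ⟨e0, he0⟩ := hFne
      have hprod : ¬ (dtT ends Dt F Tn Tp l * dtT ends Dt F Tn Tp e0 > 0) := by
        intro h; exact hl ⟨hlF, e0, he0, h⟩
      have hd0 := hdF e0 he0
      have : 0 ≤ dtT ends Dt F Tn Tp l := by nlinarith [not_lt.mp hprod]
      linarith
  -- key sum-exchange lemma
  have key : ∀ (S : Finset (Finset V)) (h : V → ℝ),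
      ∑ u, h u * (∑ U ∈ S, if u ∈ U then RT ends Dt F Tn Tp U else 0)
        = ∑ U ∈ S, RT ends Dt F Tn Tp U * ∑ u ∈ U, h u := by
    intro S h
    simp_rw [Finset.mul_sum, mul_ite, mul_zero]
    rw [Finset.sum_comm]
    refine Finset.sum_congr rfl fun U _ => ?_
    rw [Finset.sum_ite_mem, Finset.univ_inter]
    exact Finset.sum_congr rfl fun u _ => mul_comm _ _
  refine ⟨(fun v => ∑ U ∈ Tn, if v ∈ U then RT ends Dt F Tn Tp U else 0),
          (fun v => ∑ U ∈ Tp, if v ∈ U then RT ends Dt F Tn Tp U else 0),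
          (fun e => if e ∈ F ∨ e = e' then 0 else dtT ends Dt F Tn Tp e + fT1 ends Dt F Tn Tp),
          (fun e => if e ∈ F then |dtT ends Dt F Tn Tp e| - fT1 ends Dt F Tn Tp else 0),
          dtT ends Dt F Tn Tp e' + fT1 ends Dt F Tn Tp,
          fT1 ends Dt F Tn Tp, ?_, ?_, ?_, ?_, ?_, ?_, ?_, ?_⟩
  · intro u
    refine Finset.sum_nonneg fun U hU => ?_
    split
    · exact (hRpos U (Finset.mem_union_left _ hU)).le
    · exact le_refl 0
  · intro u
    refine Finset.sum_nonneg fun U hU => ?_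
    split
    · exact (hRpos U (Finset.mem_union_right _ hU)).le
    · exact le_refl 0
  · intro e
    beta_reduce
    split
    · exact le_refl 0
    · next h =>
      push_neg at h
      linarith [hdlow e h.1]
  · intro e
    beta_reduce
    split
    · next h => linarith [hfT1le e h, abs_nonneg (dtT ends Dt F Tn Tp e)]
    · exact le_refl 0
  · linarith [hdlow e' he'F]
  · exact hfT1pos.le
  · intro e
    beta_reduce
    have hsum : (∑ u, Dt u e *
        ((∑ U ∈ Tn, if u ∈ U then RT ends Dt F Tn Tp U else 0)
          - (∑ U ∈ Tp, if u ∈ U then RT ends Dt F Tn Tp U else 0)))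
        = dtT ends Dt F Tn Tp e := by
      simp_rw [mul_sub, Finset.sum_sub_distrib]
      rw [key Tn (fun u => Dt u e), key Tp (fun u => Dt u e), dtT]
      rfl
    rw [hsum]
    by_cases heF : e ∈ F
    · have hee' : e ≠ e' := fun h => he'F (h ▸ heF)
      rw [if_pos heF, if_pos (Or.inl heF), if_neg hee',
        abs_of_neg (hdF e heF)]
      ring
    · by_cases hee' : e = e'
      · subst hee'
        rw [if_neg heF, if_pos (Or.inr rfl), if_pos rfl]
        ring
      · rw [if_neg heF, if_neg (by tauto), if_neg hee']
        ring
  · -- cost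
    beta_reduce
    have h1 : (∑ u, (gD u * (∑ U ∈ Tn, if u ∈ U then RT ends Dt F Tn Tp U else 0)
        + gDm u * (∑ U ∈ Tp, if u ∈ U then RT ends Dt F Tn Tp U else 0)))
        = fTg ends Dt F gD gDm Tn Tp := by
      rw [Finset.sum_add_distrib, key Tn gD, key Tp gDm, fTg, Finset.sum_union hdisj]
      congr 1
      · refine Finset.sum_congr rfl fun U hU => ?_
        congr 1
        rw [fUg, if_pos]
        obtain ⟨⟨e1, he1⟩, _⟩ := hfailcover U (Finset.mem_union_left _ hU)
        refine ⟨e1, Finset.mem_filter.mpr ⟨he1, ?_⟩⟩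
        have hp := (hfailcover U (Finset.mem_union_left _ hU)).2 e1 he1 e1 he1
        have hne0 : dtU Dt U e1 ≠ 0 := by intro h; rw [h] at hp; simp at hp
        exact lt_of_le_of_ne (hTn U hU e1 (Finset.mem_inter.mp he1).2) hne0
      · refine Finset.sum_congr rfl fun U hU => ?_
        congr 1
        rw [fUg, if_neg]
        rintro ⟨l, hl⟩
        obtain ⟨hl1, hl2⟩ := Finset.mem_filter.mp hl
        exact absurd (hTp U hU l (Finset.mem_inter.mp hl1).2) (not_le.mpr hl2)
    have h2 : (∑ e, ((if e ∈ F then |dtT ends Dt F Tn Tp e| - fT1 ends Dt F Tn Tp else 0)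
          * (1 - (if e ∈ F then (1:ℝ) else 0))
        + (if e ∈ F ∨ e = e' then 0 else dtT ends Dt F Tn Tp e + fT1 ends Dt F Tn Tp)
          * (if e ∈ F then (1:ℝ) else 0))) = 0 := by
      refine Finset.sum_eq_zero fun e _ => ?_
      by_cases heF : e ∈ F
      · simp [heF]
      · simp [heF]
    rw [h1, h2, add_zero]
    by_cases hS : e' ∈ STset ends Dt F Tn Tp
    · have hneg : dtT ends Dt F Tn Tp e' < 0 := by
        obtain ⟨_, e0, he0, hp⟩ := hS
        nlinarith [hdF e0 he0]
      have := hcond3b hS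
      rw [abs_of_neg hneg] at this
      linarith
    · have hnn : 0 ≤ dtT ends Dt F Tn Tp e' := by
        obtain ⟨e0, he0⟩ := hFne
        have hprod : ¬ (dtT ends Dt F Tn Tp e' * dtT ends Dt F Tn Tp e0 > 0) := by
          intro h; exact hS ⟨he'F, e0, he0, h⟩
        nlinarith [not_lt.mp hprod, hdF e0 he0]
      have := hcond3a hS
      rw [abs_of_nonneg hnn] at this
      linarith
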